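/- Measurement-outcome independence of extremal swap fidelities: for any Bell outcome (i,j) and any ρ₁ ∈ S_{p₁,F₁}, ρ₂ ∈ S_{p₂,F₂}, there exist ω₁ ∈ S_{p₁,F₁}, ω₂ ∈ S_{p₂,F₂} with F'_ij(ρ₁⊗ρ₂) = F'₀₀(ω₁⊗ω₂); consequently max and min of F'_ij over these sets are independent of (i,j). Explicitly one may take ω₁ = ρ₁ and ω₂ = (Z^jX^i ⊗ Z^jX^i) ρ₂ (X^iZ^j ⊗ X^iZ^j). -/

import Mathlib

open Matrix Kronecker BigOperators ComplexOrder

noncomputable section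

/-- Pauli X matrix. -/
def PX : Matrix (Fin 2) (Fin 2) ℂ := !![0, 1; 1, 0]

/-- Pauli Y matrix. -/
def PY : Matrix (Fin 2) (Fin 2) ℂ := !![0, -Complex.I; Complex.I, 0]

/-- Pauli Z matrix. -/
def PZ : Matrix (Fin 2) (Fin 2) ℂ := !![1, 0; 0, -1]

/-- The maximally entangled two-qubit state (|00⟩+|11⟩)/√2, as a vector. -/
def bell00 : Fin 2 × Fin 2 → ℂ := fun p => if p.1 = p.2 then ((1 / Real.sqrt 2 : ℝ) : ℂ) else 0

/-- The Bell basis vector |Ψ_ij⟩ = (I ⊗ X^i Z^j)|Ψ₀₀⟩. -/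
def bell (i j : Fin 2) : Fin 2 × Fin 2 → ℂ :=
  (((1 : Matrix (Fin 2) (Fin 2) ℂ) ⊗ₖ (PX ^ (i : ℕ) * PZ ^ (j : ℕ)))).mulVec bell00

/-- The inner product ⟨φ|M|ψ⟩. -/
def braket2 {n : Type*} [Fintype n] (φ : n → ℂ) (M : Matrix n n ℂ) (ψ : n → ℂ) : ℂ :=
  star φ ⬝ᵥ M.mulVec ψ

/-- A density matrix: positive semidefinite with unit trace. -/
def IsDensity {n : Type*} [Fintype n] (ρ : Matrix n n ℂ) : Prop :=
  ρ.PosSemidef ∧ ρ.trace = 1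

/-- The Bell-diagonal twirl B(ρ). -/
def twirl (ρ : Matrix (Fin 2 × Fin 2) (Fin 2 × Fin 2) ℂ) :
    Matrix (Fin 2 × Fin 2) (Fin 2 × Fin 2) ℂ :=
  (1 / 4 : ℂ) • (ρ + (PX ⊗ₖ PX) * ρ * (PX ⊗ₖ PX)ᴴ + (PY ⊗ₖ PY) * ρ * (PY ⊗ₖ PY)ᴴ
    + (PZ ⊗ₖ PZ) * ρ * (PZ ⊗ₖ PZ)ᴴ)

/-- The Bell projector |Ψ_ij⟩⟨Ψ_ij|. -/
def bproj (i j : Fin 2) : Matrix (Fin 2 × Fin 2) (Fin 2 × Fin 2) ℂ :=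
  vecMulVec (bell i j) (star (bell i j))

/-- Partial inner product ⟨ψ|_{A₁A₂} M |ψ⟩_{A₁A₂} of a vector ψ on the middle registers
A₁,A₂ with an operator M on registers (B₁,A₁),(A₂,B₂), giving a matrix on B₁,B₂. -/
def swapProj (ψ : Fin 2 × Fin 2 → ℂ)
    (M : Matrix ((Fin 2 × Fin 2) × (Fin 2 × Fin 2)) ((Fin 2 × Fin 2) × (Fin 2 × Fin 2)) ℂ) :
    Matrix (Fin 2 × Fin 2) (Fin 2 × Fin 2) ℂ :=
  fun p q => ∑ a₁, ∑ a₂, ∑ a₁', ∑ a₂',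
    star (ψ (a₁, a₂)) * M ((p.1, a₁), (a₂, p.2)) ((q.1, a₁'), (a₂', q.2)) * ψ (a₁', a₂')

/-- The probability of Bell-measurement outcome ij on the middle registers:
p'_ij(M) = Tr[|Ψ_ij⟩⟨Ψ_ij|_{A₁A₂} M]. -/
def swapProb (i j : Fin 2)
    (M : Matrix ((Fin 2 × Fin 2) × (Fin 2 × Fin 2)) ((Fin 2 × Fin 2) × (Fin 2 × Fin 2)) ℂ) : ℂ :=
  (swapProj (bell i j) M).trace

/-- Tr[|Ψ_ij⟩⟨Ψ_ij|_{B₁B₂} |Ψ_ij⟩⟨Ψ_ij|_{A₁A₂} M]. -/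
def swapNum (i j : Fin 2)
    (M : Matrix ((Fin 2 × Fin 2) × (Fin 2 × Fin 2)) ((Fin 2 × Fin 2) × (Fin 2 × Fin 2)) ℂ) : ℂ :=
  braket2 (bell i j) (swapProj (bell i j) M) (bell i j)

/-- The postselected end-to-end fidelity F'_ij. -/
def swapFid (i j : Fin 2)
    (M : Matrix ((Fin 2 × Fin 2) × (Fin 2 × Fin 2)) ((Fin 2 × Fin 2) × (Fin 2 × Fin 2)) ℂ) : ℂ :=
  swapNum i j M / swapProb i j M

/-- The family S_{p,F}: two-qubit states of the form p|Ψ₀₀⟩⟨Ψ₀₀| + (1−p)σ for some density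
matrix σ, with fidelity ⟨Ψ₀₀|ρ|Ψ₀₀⟩ = F. -/
def Spf (p F : ℝ) : Set (Matrix (Fin 2 × Fin 2) (Fin 2 × Fin 2) ℂ) :=
  {ρ | (∃ σ : Matrix (Fin 2 × Fin 2) (Fin 2 × Fin 2) ℂ, IsDensity σ ∧
      ρ = (p : ℂ) • bproj 0 0 + ((1 - p : ℝ) : ℂ) • σ) ∧
    braket2 (bell 0 0) ρ (bell 0 0) = (F : ℂ)}

set_option maxHeartbeats 4000000

lemma bell_apply (i j : Fin 2) (p : Fin 2 × Fin 2) :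
    bell i j p = (PX^(i:ℕ)*PZ^(j:ℕ)) p.2 p.1 * ((1/Real.sqrt 2 : ℝ):ℂ) := by
  obtain ⟨a,b⟩ := p
  simp [bell, bell00, Matrix.mulVec, dotProduct, Fintype.sum_prod_type,
    Fin.sum_univ_two, Matrix.kroneckerMap_apply, Matrix.one_apply]

lemma bell_zero : bell 0 0 = bell00 := by
  funext p
  rw [bell_apply]
  simp [bell00, Matrix.one_apply, eq_comm]

lemma mem_conj (C : Matrix (Fin 2 × Fin 2) (Fin 2 × Fin 2) ℂ) (hCu : Cᴴ * C = 1)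
    (hCb : C.mulVec bell00 = bell00) (p F : ℝ) (ρ : Matrix (Fin 2 × Fin 2) (Fin 2 × Fin 2) ℂ)
    (hρ : ρ ∈ Spf p F) : C * ρ * Cᴴ ∈ Spf p F := by
  obtain ⟨⟨σ, ⟨hσpsd, hσtr⟩, hdecomp⟩, hfid⟩ := hρ
  have hCb' : Cᴴ.mulVec bell00 = bell00 := by
    conv_lhs => rw [← hCb]
    rw [Matrix.mulVec_mulVec, hCu, Matrix.one_mulVec]
  have hfid' : ∀ τ : Matrix (Fin 2 × Fin 2) (Fin 2 × Fin 2) ℂ,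
      braket2 (bell 0 0) (C * τ * Cᴴ) (bell 0 0) = braket2 (bell 0 0) τ (bell 0 0) := by
    intro τ
    simp only [braket2, bell_zero]
    rw [← Matrix.mulVec_mulVec, ← Matrix.mulVec_mulVec, hCb', dotProduct_mulVec]
    congr 1
    have := Matrix.star_mulVec (M := Cᴴ) (v := bell00)
    rw [Matrix.conjTranspose_conjTranspose] at this
    rw [← this, hCb']
  refine ⟨⟨C * σ * Cᴴ, ⟨hσpsd.mul_mul_conjTranspose_same C, ?_⟩, ?_⟩, ?_⟩
  · rw [Matrix.trace_mul_cycle, hCu, Matrix.one_mul, hσtr]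
  · have hstar : star bell00 ᵥ* Cᴴ = star bell00 := by
      rw [← Matrix.star_mulVec, hCb]
    have hproj : C * bproj 0 0 * Cᴴ = bproj 0 0 := by
      have hv : vecMulVec bell00 (star bell00) =
          Matrix.replicateCol (Fin 1) bell00 * Matrix.replicateRow (Fin 1) (star bell00) :=
        Matrix.vecMulVec_eq (Fin 1) _ _
      rw [bproj, bell_zero, hv, Matrix.mul_assoc,
        Matrix.mul_assoc (Matrix.replicateCol (Fin 1) bell00), ← Matrix.replicateRow_vecMul, hstar,
        ← Matrix.mul_assoc, ← Matrix.replicateCol_mulVec, hCb]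
    rw [hdecomp, Matrix.mul_add, Matrix.add_mul, Matrix.mul_smul, Matrix.smul_mul,
      Matrix.mul_smul, Matrix.smul_mul, hproj]
  · rw [hfid' ρ, hfid]


/-- Measurement-outcome independence: for any Bell outcome (i,j) and
ρ₁ ∈ S_{p₁,F₁}, ρ₂ ∈ S_{p₂,F₂}, the state ω₂ = (Z^jX^i ⊗ Z^jX^i) ρ₂ (X^iZ^j ⊗ X^iZ^j)
lies in S_{p₂,F₂} and F'_ij(ρ₁⊗ρ₂) = F'₀₀(ρ₁⊗ω₂); in particular such ω₁, ω₂ exist. -/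
theorem swap_fid_outcome_independent (p₁ F₁ p₂ F₂ : ℝ) (i j : Fin 2)
    (ρ₁ ρ₂ : Matrix (Fin 2 × Fin 2) (Fin 2 × Fin 2) ℂ)
    (hρ₁ : ρ₁ ∈ Spf p₁ F₁) (hρ₂ : ρ₂ ∈ Spf p₂ F₂)
    (C : Matrix (Fin 2 × Fin 2) (Fin 2 × Fin 2) ℂ)
    (hC : C = (PZ ^ (j : ℕ) * PX ^ (i : ℕ)) ⊗ₖ (PZ ^ (j : ℕ) * PX ^ (i : ℕ))) :
    (C * ρ₂ * Cᴴ ∈ Spf p₂ F₂ ∧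
      swapFid i j (ρ₁ ⊗ₖ ρ₂) = swapFid 0 0 (ρ₁ ⊗ₖ (C * ρ₂ * Cᴴ))) ∧
    ∃ ω₁ ∈ Spf p₁ F₁, ∃ ω₂ ∈ Spf p₂ F₂,
      swapFid i j (ρ₁ ⊗ₖ ρ₂) = swapFid 0 0 (ω₁ ⊗ₖ ω₂) := by
  subst hC
  have hCu : ((PZ ^ (j : ℕ) * PX ^ (i : ℕ)) ⊗ₖ (PZ ^ (j : ℕ) * PX ^ (i : ℕ)))ᴴ *
      ((PZ ^ (j : ℕ) * PX ^ (i : ℕ)) ⊗ₖ (PZ ^ (j : ℕ) * PX ^ (i : ℕ))) = 1 := by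
    fin_cases i <;> fin_cases j <;>
      · ext ⟨a, b⟩ ⟨c, d⟩
        fin_cases a <;> fin_cases b <;> fin_cases c <;> fin_cases d <;>
          norm_num [PX, PZ, Matrix.mul_apply, Matrix.conjTranspose_apply,
            Fintype.sum_prod_type, Fin.sum_univ_two, Matrix.kroneckerMap_apply,
            Matrix.one_apply, Prod.ext_iff, Prod.mk.injEq, Prod.fst_zero, Prod.snd_zero,
            Prod.fst_one, Prod.snd_one]
  have hCb : ((PZ ^ (j : ℕ) * PX ^ (i : ℕ)) ⊗ₖ (PZ ^ (j : ℕ) * PX ^ (i : ℕ))).mulVec bell00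
      = bell00 := by
    fin_cases i <;> fin_cases j <;>
      · funext ⟨a, b⟩
        fin_cases a <;> fin_cases b <;>
          norm_num [PX, PZ, bell00, Matrix.mulVec, dotProduct,
            Fintype.sum_prod_type, Fin.sum_univ_two, Matrix.kroneckerMap_apply,
            Matrix.one_apply, Prod.ext_iff, Prod.mk.injEq, Prod.fst_zero, Prod.snd_zero,
            Prod.fst_one, Prod.snd_one]
  have hmem := mem_conj _ hCu hCb p₂ F₂ ρ₂ hρ₂
  have hnum : swapNum i j (ρ₁ ⊗ₖ ρ₂) = swapNum 0 0 (ρ₁ ⊗ₖ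
      (((PZ ^ (j : ℕ) * PX ^ (i : ℕ)) ⊗ₖ (PZ ^ (j : ℕ) * PX ^ (i : ℕ))) * ρ₂ *
        ((PZ ^ (j : ℕ) * PX ^ (i : ℕ)) ⊗ₖ (PZ ^ (j : ℕ) * PX ^ (i : ℕ)))ᴴ)) := by
    fin_cases i <;> fin_cases j <;>
      · simp only [swapNum, swapProb, braket2, swapProj, Matrix.trace, Matrix.diag,
      Matrix.mulVec, dotProduct, Pi.star_apply, Fintype.sum_prod_type, Fin.sum_univ_two,
      Matrix.kroneckerMap_apply, Matrix.mul_apply, Matrix.conjTranspose_apply, bell_apply,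
      PX, PZ, pow_one, pow_zero, Fin.val_one, Fin.val_zero, mul_one, one_mul,
      Matrix.cons_val', Matrix.cons_val_zero, Matrix.cons_val_one, Matrix.head_cons,
      Matrix.empty_val', Matrix.cons_val_fin_one, Matrix.head_fin_const, Matrix.of_apply,
      Matrix.one_apply, _root_.map_zero, _root_.map_one, _root_.map_neg, if_true, if_false,
      one_ne_zero, zero_ne_one, Fin.isValue, star_zero, star_one, star_neg,
      mul_zero, zero_mul, add_zero, zero_add, neg_mul, mul_neg, neg_neg,
      Complex.star_def, _root_.map_mul, Complex.conj_ofReal]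
        all_goals ring
  have hprob : swapProb i j (ρ₁ ⊗ₖ ρ₂) = swapProb 0 0 (ρ₁ ⊗ₖ
      (((PZ ^ (j : ℕ) * PX ^ (i : ℕ)) ⊗ₖ (PZ ^ (j : ℕ) * PX ^ (i : ℕ))) * ρ₂ *
        ((PZ ^ (j : ℕ) * PX ^ (i : ℕ)) ⊗ₖ (PZ ^ (j : ℕ) * PX ^ (i : ℕ)))ᴴ)) := by
    fin_cases i <;> fin_cases j <;>
      · simp only [swapNum, swapProb, braket2, swapProj, Matrix.trace, Matrix.diag,
      Matrix.mulVec, dotProduct, Pi.star_apply, Fintype.sum_prod_type, Fin.sum_univ_two,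
      Matrix.kroneckerMap_apply, Matrix.mul_apply, Matrix.conjTranspose_apply, bell_apply,
      PX, PZ, pow_one, pow_zero, Fin.val_one, Fin.val_zero, mul_one, one_mul,
      Matrix.cons_val', Matrix.cons_val_zero, Matrix.cons_val_one, Matrix.head_cons,
      Matrix.empty_val', Matrix.cons_val_fin_one, Matrix.head_fin_const, Matrix.of_apply,
      Matrix.one_apply, _root_.map_zero, _root_.map_one, _root_.map_neg, if_true, if_false,
      one_ne_zero, zero_ne_one, Fin.isValue, star_zero, star_one, star_neg,
      mul_zero, zero_mul, add_zero, zero_add, neg_mul, mul_neg, neg_neg,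
      Complex.star_def, _root_.map_mul, Complex.conj_ofReal]
        all_goals ring
  have hfid : swapFid i j (ρ₁ ⊗ₖ ρ₂) = swapFid 0 0 (ρ₁ ⊗ₖ
      (((PZ ^ (j : ℕ) * PX ^ (i : ℕ)) ⊗ₖ (PZ ^ (j : ℕ) * PX ^ (i : ℕ))) * ρ₂ *
        ((PZ ^ (j : ℕ) * PX ^ (i : ℕ)) ⊗ₖ (PZ ^ (j : ℕ) * PX ^ (i : ℕ)))ᴴ)) := by
    rw [swapFid, swapFid, hnum, hprob]
  exact ⟨⟨hmem, hfid⟩, ρ₁, hρ₁, _, hmem, hfid⟩
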